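/- Let Ω be a reflexive nondegenerate bilinear form on a finite-dimensional F-vector space V, and let f be a map from the set of 1-dimensional subspaces of V to itself such that: (1') for every 1-dimensional subspace l, the subspaces l and f(l) are Ω-orthogonal (Ω(x,y) = 0 for all x ∈ l, y ∈ f(l)); and (2') for any two 1-dimensional subspaces t₁, t₂, the subspaces t₁ and f(t₂) are Ω-orthogonal if and only if t₂ and f(t₁) are Ω-orthogonal. Then f is a bijection of the set of 1-dimensional subspaces of V onto itself. -/

import Mathlib

namespace Stmt16Aux

open Module Submodule LinearMap

variable {F V : Type*} [Field F] [AddCommGroup V] [Module F V]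

/-- If `ker φ ≤ ker ψ` for functionals, then `ψ` is a scalar multiple of `φ`. -/
lemma smul_of_ker_le {φ ψ : V →ₗ[F] F} (h : ker φ ≤ ker ψ) :
    ∃ a : F, ψ = a • φ := by
  by_cases hφ : φ = 0
  · refine ⟨0, ?_⟩
    ext v
    have hv : v ∈ ker ψ := h (by simp [hφ, mem_ker])
    simpa [mem_ker] using hv
  · have hx : ∃ x, φ x ≠ 0 := by
      by_contra hc
      push_neg at hc
      exact hφ (LinearMap.ext fun v => by simpa using hc v)
    obtain ⟨x, hx⟩ := hx
    refine ⟨ψ x / φ x, ?_⟩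
    ext v
    have hmem : v - (φ v / φ x) • x ∈ ker φ := by
      rw [mem_ker, map_sub, map_smul]
      rw [smul_eq_mul, div_mul_cancel₀ _ hx, sub_self]
    have := h hmem
    rw [mem_ker, map_sub, map_smul] at this
    have hψ : ψ v = (φ v / φ x) * ψ x := by
      have := sub_eq_zero.mp this
      simpa [smul_eq_mul] using this
    rw [hψ]
    simp only [LinearMap.smul_apply, smul_eq_mul]
    field_simp

/-- If `ker φ ⊓ ker ψ ≤ ker χ` for functionals, then `χ ∈ span {φ, ψ}`. -/
lemma mem_span_pair_of_ker {φ ψ χ : V →ₗ[F] F} (h : ker φ ⊓ ker ψ ≤ ker χ) :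
    ∃ a b : F, χ = a • φ + b • ψ := by
  have h1 : ker (φ.domRestrict (ker ψ)) ≤ ker (χ.domRestrict (ker ψ)) := by
    rintro ⟨v, hvψ⟩ hv
    rw [mem_ker, domRestrict_apply] at hv ⊢
    exact h ⟨hv, hvψ⟩
  obtain ⟨a, ha⟩ := smul_of_ker_le h1
  have h2 : ker ψ ≤ ker (χ - a • φ) := by
    intro v hv
    have h3 := LinearMap.congr_fun ha ⟨v, hv⟩
    simp only [domRestrict_apply, LinearMap.smul_apply, smul_eq_mul] at h3
    rw [mem_ker]
    simp [h3]
  obtain ⟨b, hb⟩ := smul_of_ker_le h2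
  refine ⟨a, b, ?_⟩
  have hχ : χ - a • φ = b • ψ := hb
  have := congrArg (fun g => g + a • φ) hχ
  simpa [sub_add_cancel, add_comm] using this

variable [FiniteDimensional F V]

/-- Every element of the line subtype has a generator. -/
lemma exists_gen (l : {l : Submodule F V // Module.finrank F l = 1}) :
    ∃ x : V, x ∈ l.1 ∧ x ≠ 0 ∧ l.1 = Submodule.span F {x} := by
  obtain ⟨v, hv0, hv⟩ := (finrank_eq_one_iff' (K := F) (V := l.1)).mp l.2
  have hvne : (v : V) ≠ 0 := by simpa using hv0
  refine ⟨v.1, v.2, hvne, ?_⟩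
  have hle : Submodule.span F {(v : V)} ≤ l.1 := by
    rw [Submodule.span_le]
    simpa using v.2
  refine (Submodule.eq_of_le_of_finrank_le hle ?_).symm
  rw [l.2, finrank_span_singleton hvne]

noncomputable def gen (l : {l : Submodule F V // Module.finrank F l = 1}) : V :=
  (exists_gen l).choose

lemma gen_mem (l : {l : Submodule F V // Module.finrank F l = 1}) : gen l ∈ l.1 :=
  (exists_gen l).choose_spec.1

lemma gen_ne (l : {l : Submodule F V // Module.finrank F l = 1}) : gen l ≠ 0 :=
  (exists_gen l).choose_spec.2.1

lemma gen_span (l : {l : Submodule F V // Module.finrank F l = 1}) :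
    l.1 = Submodule.span F {gen l} :=
  (exists_gen l).choose_spec.2.2

/-- The line spanned by a nonzero vector. -/
def lineOf (v : V) (hv : v ≠ 0) : {l : Submodule F V // Module.finrank F l = 1} :=
  ⟨Submodule.span F {v}, finrank_span_singleton hv⟩

variable (f : {l : Submodule F V // Module.finrank F l = 1} →
    {l : Submodule F V // Module.finrank F l = 1})

open Classical in
/-- A generator of the image line of the line spanned by `v` (and `0` for `v = 0`). -/
noncomputable def w (v : V) : V :=
  if hv : v ≠ 0 then gen (f (lineOf v hv)) else 0

open Classical in
lemma w_def (v : V) (hv : v ≠ 0) : w f v = gen (f (lineOf v hv)) := dif_pos hv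

open Classical in
lemma w_zero : w f (0 : V) = 0 := dif_neg (by simp)

lemma w_ne (v : V) (hv : v ≠ 0) : w f v ≠ 0 := by
  rw [w_def f v hv]; exact gen_ne _

lemma w_smul (c : F) (v : V) (hc : c ≠ 0) (hv : v ≠ 0) : w f (c • v) = w f v := by
  rw [w_def f (c • v) (smul_ne_zero hc hv), w_def f v hv]
  exact congrArg (fun l => gen (f l))
    (Subtype.ext (Submodule.span_singleton_smul_eq (isUnit_iff_ne_zero.mpr hc) v))

variable (Ω : LinearMap.BilinForm F V)

lemma ortho_iff (v : V) (hv : v ≠ 0) (t : {l : Submodule F V // Module.finrank F l = 1}) :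
    (∀ x ∈ (lineOf (F := F) v hv).1, ∀ y ∈ (f t).1, Ω x y = 0) ↔ Ω v (gen (f t)) = 0 := by
  constructor
  · intro h
    exact h v (Submodule.mem_span_singleton_self v) _ (gen_mem _)
  · intro h x hx y hy
    obtain ⟨c, rfl⟩ := Submodule.mem_span_singleton.mp hx
    rw [gen_span (f t)] at hy
    obtain ⟨d, rfl⟩ := Submodule.mem_span_singleton.mp hy
    rw [map_smul, map_smul]
    simp [h]

/-- Key symmetry, from hypothesis (2'). -/
lemma sym (h2 : ∀ t₁ t₂, (∀ x ∈ t₁.1, ∀ y ∈ (f t₂).1, Ω x y = 0) ↔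
      (∀ x ∈ t₂.1, ∀ y ∈ (f t₁).1, Ω x y = 0))
    (u v : V) (hu : u ≠ 0) (hv : v ≠ 0) :
    Ω u (w f v) = 0 ↔ Ω v (w f u) = 0 := by
  rw [w_def f v hv, w_def f u hu]
  have h := h2 (lineOf u hu) (lineOf v hv)
  rw [ortho_iff f Ω u hu (lineOf v hv), ortho_iff f Ω v hv (lineOf u hu)] at h
  exact h

lemma rightnd (hnd : Ω.Nondegenerate) (hrefl : ∀ x y : V, Ω x y = 0 ↔ Ω y x = 0)
    (z : V) (h : ∀ u, Ω u z = 0) : z = 0 :=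
  hnd.1 z fun u => (hrefl u z).mp (h u)

lemma flipinj (hnd : Ω.Nondegenerate) (hrefl : ∀ x y : V, Ω x y = 0 ↔ Ω y x = 0)
    (z : V) (h : Ω.flip z = 0) : z = 0 :=
  rightnd Ω hnd hrefl z fun u => by simpa using LinearMap.congr_fun h u

/-- Key additivity: `w (x+y)` lies in the span of `w x` and `w y`. -/
lemma w_add (hnd : Ω.Nondegenerate) (hrefl : ∀ x y : V, Ω x y = 0 ↔ Ω y x = 0)
    (h2 : ∀ t₁ t₂, (∀ x ∈ t₁.1, ∀ y ∈ (f t₂).1, Ω x y = 0) ↔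
      (∀ x ∈ t₂.1, ∀ y ∈ (f t₁).1, Ω x y = 0))
    (x y : V) (hx : x ≠ 0) (hy : y ≠ 0) (hxy : x + y ≠ 0) :
    ∃ a b : F, w f (x + y) = a • w f x + b • w f y := by
  have hker : ker (Ω.flip (w f x)) ⊓ ker (Ω.flip (w f y)) ≤ ker (Ω.flip (w f (x + y))) := by
    rintro u ⟨hu1, hu2⟩
    simp only [SetLike.mem_coe, mem_ker] at hu1 hu2
    have hu1' : Ω u (w f x) = 0 := hu1
    have hu2' : Ω u (w f y) = 0 := hu2
    rw [mem_ker]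
    rcases eq_or_ne u 0 with rfl | hu
    · simp
    · have hx' : Ω x (w f u) = 0 := (sym f Ω h2 u x hu hx).mp hu1'
      have hy' : Ω y (w f u) = 0 := (sym f Ω h2 u y hu hy).mp hu2'
      have hxy' : Ω (x + y) (w f u) = 0 := by
        rw [map_add, LinearMap.add_apply, hx', hy', add_zero]
      show Ω u (w f (x + y)) = 0
      exact (sym f Ω h2 u (x + y) hu hxy).mpr hxy'
  obtain ⟨a, b, hab⟩ := mem_span_pair_of_ker hker
  refine ⟨a, b, ?_⟩
  have h0 : Ω.flip (w f (x + y) - (a • w f x + b • w f y)) = 0 := by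
    rw [map_sub, map_add, map_smul, map_smul, hab]
    abel
  exact sub_eq_zero.mp (flipinj Ω hnd hrefl _ h0)

end Stmt16Aux

theorem stmt_16 {F V : Type*} [Field F] [AddCommGroup V] [Module F V]
    [FiniteDimensional F V]
    (Ω : LinearMap.BilinForm F V) (hnd : Ω.Nondegenerate)
    (hrefl : ∀ x y : V, Ω x y = 0 ↔ Ω y x = 0)
    (f : {l : Submodule F V // Module.finrank F l = 1} →
         {l : Submodule F V // Module.finrank F l = 1})
    (h1 : ∀ l, ∀ x ∈ l.1, ∀ y ∈ (f l).1, Ω x y = 0)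
    (h2 : ∀ t₁ t₂, (∀ x ∈ t₁.1, ∀ y ∈ (f t₂).1, Ω x y = 0) ↔
                   (∀ x ∈ t₂.1, ∀ y ∈ (f t₁).1, Ω x y = 0)) :
    Function.Bijective f := by
  classical
  open Stmt16Aux Module Submodule LinearMap in
  constructor
  · -- Injectivity
    intro A B hAB
    by_contra hne
    set a := gen A with ha_def
    set b := gen B with hb_def
    have ha0 : a ≠ 0 := gen_ne A
    have hb0 : b ≠ 0 := gen_ne B
    have hA : lineOf a ha0 = A := Subtype.ext (gen_span A).symm
    have hB : lineOf b hb0 = B := Subtype.ext (gen_span B).symm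
    have hwa : w f a = gen (f A) := by rw [w_def f a ha0, hA]
    have hwb : w f b = gen (f A) := by rw [w_def f b hb0, hB, ← hAB]
    -- pick u with Ω u (gen (f A)) ≠ 0
    obtain ⟨u, hu⟩ : ∃ u, Ω u (gen (f A)) ≠ 0 := by
      by_contra hc
      push_neg at hc
      exact gen_ne (f A) (rightnd Ω hnd hrefl _ hc)
    have hu0 : u ≠ 0 := by
      rintro rfl
      exact hu (by simp)
    -- Claim: every nonzero vector of span{a,b} pairs nontrivially with w f u
    have claim : ∀ α β : F, α • a + β • b ≠ 0 → Ω (α • a + β • b) (w f u) ≠ 0 := by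
      intro α β hc hzero
      have h1' : Ω u (w f (α • a + β • b)) = 0 := (sym f Ω h2 (α • a + β • b) u hc hu0).mp hzero
      have hker : ker (Ω.flip (gen (f A))) ≤ ker (Ω.flip (w f (α • a + β • b))) := by
        intro v hv
        rw [mem_ker] at hv ⊢
        have hv' : Ω v (gen (f A)) = 0 := hv
        rcases eq_or_ne v 0 with rfl | hv0
        · simp
        · show Ω v (w f (α • a + β • b)) = 0
          have ha' : Ω a (w f v) = 0 := (sym f Ω h2 v a hv0 ha0).mp (by rw [hwa]; exact hv')
          have hb' : Ω b (w f v) = 0 := (sym f Ω h2 v b hv0 hb0).mp (by rw [hwb]; exact hv')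
          have hc' : Ω (α • a + β • b) (w f v) = 0 := by
            rw [map_add, map_smul, map_smul, LinearMap.add_apply, LinearMap.smul_apply,
              LinearMap.smul_apply, ha', hb']
            simp
          exact (sym f Ω h2 (α • a + β • b) v hc hv0).mp hc'
      obtain ⟨lam, hlam⟩ := smul_of_ker_le hker
      have heval : Ω u (w f (α • a + β • b)) = lam * Ω u (gen (f A)) :=
        LinearMap.congr_fun hlam u
      have hlam0 : lam = 0 := by
        rw [h1'] at heval
        rcases mul_eq_zero.mp heval.symm with h | h
        · exact h
        · exact absurd h hu
      rw [hlam0, zero_smul] at hlam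
      exact w_ne f _ hc (flipinj Ω hnd hrefl _ hlam)
    have hp : Ω a (w f u) ≠ 0 := by
      have := claim 1 0 (by simpa using ha0)
      simpa using this
    have hq : Ω b (w f u) ≠ 0 := by
      have := claim 0 1 (by simpa using hb0)
      simpa using this
    set p := Ω a (w f u) with hp_def
    set q := Ω b (w f u) with hq_def
    have hc0 : q • a + (-p) • b ≠ 0 := by
      intro h
      rw [neg_smul, add_neg_eq_zero] at h
      have hab' : a = (q⁻¹ * p) • b := by
        rw [mul_smul]
        rw [eq_inv_smul_iff₀ hq]
        exact h
      apply hne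
      apply Subtype.ext
      rw [gen_span A, gen_span B, ← ha_def, ← hb_def, hab',
        Submodule.span_singleton_smul_eq (isUnit_iff_ne_zero.mpr (by
          exact mul_ne_zero (inv_ne_zero hq) hp)) b]
    apply claim q (-p) hc0
    rw [map_add, map_smul, map_smul, LinearMap.add_apply, LinearMap.smul_apply,
      LinearMap.smul_apply, ← hp_def, ← hq_def]
    simp [mul_comm]
  · -- Surjectivity
    intro m
    set wm := gen m with hwm_def
    have hwm : wm ≠ 0 := gen_ne m
    set H : Submodule F V := ker (Ω.flip wm) with hH_def
    have hHne : H ≠ ⊤ := by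
      obtain ⟨u, hu⟩ : ∃ u, Ω u wm ≠ 0 := by
        by_contra hc
        push_neg at hc
        exact hwm (rightnd Ω hnd hrefl _ hc)
      intro htop
      apply hu
      have hmem : u ∈ H := htop ▸ Submodule.mem_top
      rw [hH_def, mem_ker] at hmem
      exact hmem
    have hs : Module.finrank F H < Module.finrank F V :=
      Submodule.finrank_lt hHne
    let b := Module.finBasis F H
    let wb : Fin (Module.finrank F H) → V := fun i => w f ((b i : V))
    set U : Submodule F V := Submodule.span F (Set.range wb) with hU_def
    -- the submodule of vectors v with w f v ∈ U
    let S : Submodule F V :=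
      { carrier := {v | w f v ∈ U}
        zero_mem' := by simp [w_zero, Submodule.zero_mem]
        add_mem' := by
          intro x y hx hy
          simp only [Set.mem_setOf_eq] at hx hy ⊢
          rcases eq_or_ne x 0 with rfl | hx0
          · simpa using hy
          rcases eq_or_ne y 0 with rfl | hy0
          · simpa using hx
          rcases eq_or_ne (x + y) 0 with h0 | hxy0
          · rw [h0, w_zero]
            exact Submodule.zero_mem U
          · obtain ⟨a', b', hab⟩ := w_add f Ω hnd hrefl h2 x y hx0 hy0 hxy0
            rw [hab]
            exact Submodule.add_mem U (Submodule.smul_mem U _ hx) (Submodule.smul_mem U _ hy)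
        smul_mem' := by
          intro c x hx
          simp only [Set.mem_setOf_eq] at hx ⊢
          rcases eq_or_ne c 0 with rfl | hc0
          · rw [zero_smul, w_zero]
            exact Submodule.zero_mem U
          rcases eq_or_ne x 0 with rfl | hx0
          · rw [smul_zero, w_zero]
            exact Submodule.zero_mem U
          · rw [w_smul f c x hc0 hx0]
            exact hx }
    have hHS : ∀ v ∈ H, w f v ∈ U := by
      have hbS : ∀ i, ((b i : V)) ∈ S := fun i => by
        show w f ((b i : V)) ∈ U
        exact Submodule.subset_span ⟨i, rfl⟩
      intro v hv
      have hrepr := b.sum_repr ⟨v, hv⟩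
      have hvsum : v = ∑ i, b.repr ⟨v, hv⟩ i • ((b i : V)) := by
        have := congrArg (H.subtype) hrepr
        simp only [map_sum, map_smul, Submodule.coe_subtype] at this
        exact this.symm
      have : v ∈ S := by
        rw [hvsum]
        exact Submodule.sum_mem S fun i _ => Submodule.smul_mem S _ (hbS i)
      exact this
    -- find nonzero z orthogonal to all of U
    let Φ : V →ₗ[F] (Fin (Module.finrank F H) → F) := LinearMap.pi (fun i => Ω.flip (wb i))
    have hkerΦ : ker Φ ≠ ⊥ := by
      intro hbot
      have hinj : Function.Injective Φ := ker_eq_bot.mp hbot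
      have hle := LinearMap.finrank_le_finrank_of_injective hinj
      rw [Module.finrank_pi] at hle
      simp only [Fintype.card_fin] at hle
      omega
    obtain ⟨z, hzker, hz0⟩ := (Submodule.ne_bot_iff _).mp hkerΦ
    have hzwb : ∀ i, Ω z (wb i) = 0 := by
      intro i
      have hΦz : Φ z = 0 := hzker
      exact congrFun hΦz i
    have hzU : ∀ x ∈ U, Ω z x = 0 := by
      intro x hx
      have hle : U ≤ ker (Ω z) := by
        rw [hU_def, Submodule.span_le]
        rintro _ ⟨i, rfl⟩
        simp only [SetLike.mem_coe, mem_ker]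
        exact hzwb i
      exact hle hx
    -- conclude: w f z is proportional to wm
    have hkk : ker (Ω.flip wm) ≤ ker (Ω.flip (w f z)) := by
      intro v hv
      rw [mem_ker]
      rcases eq_or_ne v 0 with rfl | hv0
      · simp
      · show Ω v (w f z) = 0
        exact (sym f Ω h2 z v hz0 hv0).mp (hzU _ (hHS v hv))
    obtain ⟨lam, hlam⟩ := smul_of_ker_le hkk
    have hwz : w f z = lam • wm := by
      have h0 : Ω.flip (w f z - lam • wm) = 0 := by
        rw [map_sub, map_smul, hlam]
        abel
      exact sub_eq_zero.mp (flipinj Ω hnd hrefl _ h0)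
    have hlam0 : lam ≠ 0 := by
      rintro rfl
      rw [zero_smul] at hwz
      exact w_ne f z hz0 hwz
    refine ⟨lineOf z hz0, ?_⟩
    apply Subtype.ext
    rw [gen_span (f (lineOf z hz0)), ← w_def f z hz0, hwz,
      Submodule.span_singleton_smul_eq (isUnit_iff_ne_zero.mpr hlam0) wm, hwm_def,
      ← gen_span m]
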